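/- Fix n ∈ ℕ with n ≥ 2 and real parameters α₁, α₂, β₀, β₁, β₂ with α₁ ≠ 0 and β₂ ≠ 0, and let P_j ∈ ℝ[ζ] be the polynomials defined by P_{−1} = 0, P_0 = 1, P_{j+1}(ζ) = (ζ − j(j−1)α₂ − j β₁) P_j(ζ) + j(n+1−j) β₂ ((j−1)α₁ + β₀) P_{j−1}(ζ). Assume (β₀/α₁)_j ≠ 0 for 1 ≤ j ≤ m where 1 ≤ m ≤ n−1. Then for every real ζ: Σ_{j=0}^{m} P_j(ζ)² / (j! (β₂ α₁)^j (β₀/α₁)_j (−n)_j) = (P_{m+1}'(ζ) P_m(ζ) − P_m'(ζ) P_{m+1}(ζ)) / (m! (β₂ α₁)^m (β₀/α₁)_m (−n)_m), where P' denotes the derivative of the polynomial P with respect to ζ. -/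

import Mathlib

open Polynomial

lemma poch_neg_ne_zero (n : ℕ) (k : ℕ) (hk : k ≤ n) :
    (ascPochhammer ℝ k).eval (-(n : ℝ)) ≠ 0 := by
  induction k with
  | zero => simp
  | succ k ih =>
    rw [ascPochhammer_succ_right]
    simp only [eval_mul, eval_add, eval_X, eval_natCast]
    have h1 : (ascPochhammer ℝ k).eval (-(n : ℝ)) ≠ 0 := ih (by omega)
    have h2 : -(n : ℝ) + k ≠ 0 := by
      have : k < n := by omega
      have : (k : ℝ) < n := by exact_mod_cast this
      linarith
    exact mul_ne_zero h1 h2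

/-- Confluent (ζ₂ → ζ₁) limit of the Christoffel–Darboux formula for the finite
sequence of orthogonal polynomials attached to the generalized confluent Heun
equation. -/
theorem heun_christoffel_darboux_confluent
    (n : ℕ) (hn : 2 ≤ n) (α₁ α₂ β₀ β₁ β₂ : ℝ) (hα₁ : α₁ ≠ 0) (hβ₂ : β₂ ≠ 0)
    (P : ℕ → Polynomial ℝ) (hP0 : P 0 = 1) (hP1 : P 1 = X)
    (hPrec : ∀ j : ℕ, 1 ≤ j → P (j + 1) =
      (X - C ((j : ℝ) * ((j : ℝ) - 1) * α₂ + (j : ℝ) * β₁)) * P j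
        + C ((j : ℝ) * ((n : ℝ) + 1 - (j : ℝ)) * β₂ * (((j : ℝ) - 1) * α₁ + β₀)) * P (j - 1))
    (m : ℕ) (hm1 : 1 ≤ m) (hmn : m ≤ n - 1)
    (hpoch : ∀ j : ℕ, 1 ≤ j → j ≤ m → (ascPochhammer ℝ j).eval (β₀ / α₁) ≠ 0)
    (ζ : ℝ) :
    ∑ j ∈ Finset.range (m + 1),
      ((P j).eval ζ) ^ 2 /
        ((j.factorial : ℝ) * (β₂ * α₁) ^ j * (ascPochhammer ℝ j).eval (β₀ / α₁)
          * (ascPochhammer ℝ j).eval (-(n : ℝ)))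
    = ((derivative (P (m + 1))).eval ζ * (P m).eval ζ
        - (derivative (P m)).eval ζ * (P (m + 1)).eval ζ) /
        ((m.factorial : ℝ) * (β₂ * α₁) ^ m * (ascPochhammer ℝ m).eval (β₀ / α₁)
          * (ascPochhammer ℝ m).eval (-(n : ℝ))) := by
  revert hmn hpoch
  induction m, hm1 using Nat.le_induction with
  | base =>
    intro hmn hpoch
    have h2 := hPrec 1 le_rfl
    norm_num at h2
    have hβ₀ : β₀ / α₁ ≠ 0 := by
      have := hpoch 1 le_rfl le_rfl
      simpa using this
    have hβ₀' : β₀ ≠ 0 := fun h => hβ₀ (by simp [h])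
    have hn' : (n : ℝ) ≠ 0 := Nat.cast_ne_zero.2 (by omega)
    rw [Finset.sum_range_succ, Finset.sum_range_succ, Finset.sum_range_zero]
    rw [h2, hP0, hP1]
    simp only [Nat.factorial, ascPochhammer_zero, ascPochhammer_one, eval_one, eval_X,
      eval_zero, pow_zero, pow_one, Nat.cast_one, derivative_add, derivative_mul,
      derivative_sub, derivative_X, derivative_C, derivative_one, eval_add, eval_mul,
      eval_sub, eval_C, eval_pow, derivative_natCast, eval_natCast]
    field_simp
    ring
  | succ m hm IH =>
    intro hmn hpoch
    have IH' := IH (by omega) (fun j h1 h2 => hpoch j h1 (by omega))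
    have hrec := hPrec (m + 1) (by omega)
    have hms : (m + 1) - 1 = m := rfl
    rw [hms] at hrec
    set c : ℝ := ((m + 1 : ℕ) : ℝ) * (((m + 1 : ℕ) : ℝ) - 1) * α₂ + ((m + 1 : ℕ) : ℝ) * β₁
      with hc
    set d : ℝ := ((m + 1 : ℕ) : ℝ) * ((n : ℝ) + 1 - ((m + 1 : ℕ) : ℝ)) * β₂
      * ((((m + 1 : ℕ) : ℝ) - 1) * α₁ + β₀) with hd
    have he2 : (P (m + 1 + 1)).eval ζ = (ζ - c) * (P (m + 1)).eval ζ + d * (P m).eval ζ := by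
      simp only [hrec, eval_add, eval_mul, eval_sub, eval_X, eval_C]
    have hq2 : (derivative (P (m + 1 + 1))).eval ζ
        = (P (m + 1)).eval ζ + (ζ - c) * (derivative (P (m + 1))).eval ζ
          + d * (derivative (P m)).eval ζ := by
      rw [hrec]
      simp only [derivative_add, derivative_mul, derivative_sub, derivative_X, derivative_C,
        eval_add, eval_mul, eval_sub, eval_X, eval_C, eval_one, eval_zero]
      ring
    have hAm : (ascPochhammer ℝ m).eval (β₀ / α₁) ≠ 0 := by
      rcases Nat.eq_zero_or_pos m with h | h
      · simp [h]
      · exact hpoch m h (by omega)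
    have hAm1 : (ascPochhammer ℝ (m + 1)).eval (β₀ / α₁) ≠ 0 := hpoch (m + 1) (by omega) le_rfl
    have hBm : (ascPochhammer ℝ m).eval (-(n : ℝ)) ≠ 0 := poch_neg_ne_zero n m (by omega)
    have hAsucc : (ascPochhammer ℝ (m + 1)).eval (β₀ / α₁)
        = (ascPochhammer ℝ m).eval (β₀ / α₁) * (β₀ / α₁ + m) := by
      simp [ascPochhammer_succ_right]
    have hBsucc : (ascPochhammer ℝ (m + 1)).eval (-(n : ℝ))
        = (ascPochhammer ℝ m).eval (-(n : ℝ)) * (-(n : ℝ) + m) := by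
      simp [ascPochhammer_succ_right]
    have hfac : (m : ℝ) * α₁ + β₀ = α₁ * (β₀ / α₁ + m) := by
      field_simp; ring
    have hd' : d = ((m : ℝ) + 1) * ((n : ℝ) - m) * β₂ * (α₁ * (β₀ / α₁ + m)) := by
      rw [hd, ← hfac]; push_cast; ring
    have hdne : d ≠ 0 := by
      rw [hd']
      have h1 : ((m : ℝ) + 1) ≠ 0 := by positivity
      have h2 : (n : ℝ) - m ≠ 0 := by
        have : m < n := by omega
        have : (m : ℝ) < n := by exact_mod_cast this
        linarith
      have h3 : β₀ / α₁ + m ≠ 0 := by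
        intro h
        exact hAm1 (by rw [hAsucc, h, mul_zero])
      exact mul_ne_zero (mul_ne_zero (mul_ne_zero h1 h2) hβ₂) (mul_ne_zero hα₁ h3)
    have hHm : (m.factorial : ℝ) * (β₂ * α₁) ^ m * (ascPochhammer ℝ m).eval (β₀ / α₁)
        * (ascPochhammer ℝ m).eval (-(n : ℝ)) ≠ 0 := by
      have h1 : (m.factorial : ℝ) ≠ 0 := Nat.cast_ne_zero.2 m.factorial_ne_zero
      have h2 : (β₂ * α₁) ^ m ≠ 0 := pow_ne_zero _ (mul_ne_zero hβ₂ hα₁)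
      exact mul_ne_zero (mul_ne_zero (mul_ne_zero h1 h2) hAm) hBm
    have hHsucc : ((m + 1).factorial : ℝ) * (β₂ * α₁) ^ (m + 1)
        * (ascPochhammer ℝ (m + 1)).eval (β₀ / α₁) * (ascPochhammer ℝ (m + 1)).eval (-(n : ℝ))
        = (-d) * ((m.factorial : ℝ) * (β₂ * α₁) ^ m * (ascPochhammer ℝ m).eval (β₀ / α₁)
          * (ascPochhammer ℝ m).eval (-(n : ℝ))) := by
      rw [hAsucc, hBsucc, hd', Nat.factorial_succ, pow_succ]
      push_cast
      ring
    rw [Finset.sum_range_succ, IH', hHsucc, he2, hq2]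
    field_simp
    ring
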